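/- Let n = 2r ≥ 4 be even and let G be the cycle graph on vertices {1,…,n} with edges (i,i+1) for 1 ≤ i ≤ n−1 together with (n,1). Let C be the cyclic rotation configuration defined by C(i) = i−1 for 2 ≤ i ≤ n and C(1) = n. Then every sequence of matchings solving the instance (G,C) has length at least n−1. -/

import Mathlib

/-- A matching of the graph `G`, encoded as an involution of the vertex set that
moves vertices only along edges of `G`. -/
def IsMatchingPerm {V : Type*} (G : SimpleGraph V) (m : V → V) : Prop :=
  Function.Involutive m ∧ ∀ v, m v = v ∨ G.Adj v (m v)

/-- The configuration obtained from `C` by applying the sequence of matchings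
`ms = [M₁, …, M_k]` (with `M₁` applied first):  `M_k ⋯ M₁ C = C ∘ m₁ ∘ ⋯ ∘ m_k`,
where `(M C)(v) = C (m v)`. -/
def routeSeq {V : Type*} (C : V → V) (ms : List (V → V)) : V → V :=
  C ∘ ms.foldr (· ∘ ·) id

/-- The sequence of matchings `ms = (M₁, …, M_k)` solves the instance `(G, C)`,
i.e. `M_k ⋯ M₁ C = Id`. -/
def Solves {V : Type*} (G : SimpleGraph V) (C : V → V) (ms : List (V → V)) : Prop :=
  (∀ m ∈ ms, IsMatchingPerm G m) ∧ routeSeq C ms = id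

/-- The cycle graph on vertices `{0, …, n-1}` (representing `{1, …, n}`),
with edges `(i, i+1)` for `i < n-1` together with `(n-1, 0)`. -/
def cycleGraph (n : ℕ) : SimpleGraph (Fin n) :=
  SimpleGraph.fromRel fun i j => (i.val + 1) % n = j.val

/-- The cyclic rotation configuration: `C i = i - 1 (mod n)`, i.e. (1-indexed)
`C(i) = i-1` for `2 ≤ i ≤ n` and `C(1) = n`. -/
def rotDown (n : ℕ) : Fin n → Fin n := fun i =>
  if i.val = 0 then ⟨n - 1, Nat.sub_lt i.pos Nat.one_pos⟩
  else ⟨i.val - 1, lt_of_le_of_lt (Nat.sub_le _ _) i.isLt⟩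

/-- The signed one-step displacement of the matching `m` at vertex `v`. -/
def delta (n : ℕ) (m : Fin n → Fin n) (v : Fin n) : ℤ :=
  if m v = v then 0 else if (v.val + 1) % n = (m v).val then 1 else -1

lemma delta_abs_le (n : ℕ) (m : Fin n → Fin n) (v : Fin n) : |delta n m v| ≤ 1 := by
  unfold delta; split_ifs <;> simp

lemma two_ne_zero_zmod {n : ℕ} (hn : 4 ≤ n) : (2 : ZMod n) ≠ 0 := by
  intro h
  have h2 : (n : ℕ) ∣ 2 := (ZMod.natCast_eq_zero_iff 2 n).mp (by exact_mod_cast h)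
  have := Nat.le_of_dvd (by norm_num) h2
  omega

lemma delta_step {n : ℕ} (hn : 4 ≤ n) {m : Fin n → Fin n}
    (hm : IsMatchingPerm (cycleGraph n) m) (v : Fin n) :
    ((m v).val : ZMod n) = (v.val : ZMod n) + delta n m v := by
  rcases hm.2 v with h | h
  · simp [delta, h]
  · rw [cycleGraph, SimpleGraph.fromRel_adj] at h
    obtain ⟨hne, hadj⟩ := h
    have hmv : m v ≠ v := fun he => hne he.symm
    rcases hadj with h1 | h2
    · have : delta n m v = 1 := by simp [delta, hmv, h1]
      rw [this, ← h1]
      push_cast [ZMod.natCast_mod]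
      ring
    · -- (m v).val + 1 ≡ v, so m v = v - 1; must show the other case fails
      have hcond : ¬ ((v.val + 1) % n = (m v).val) := by
        intro h1
        have e1 : ((m v).val : ZMod n) = (v.val : ZMod n) + 1 := by
          rw [← h1, ZMod.natCast_mod]; push_cast; ring
        have e2 : ((v.val : ZMod n)) = ((m v).val : ZMod n) + 1 := by
          rw [← h2, ZMod.natCast_mod]; push_cast; ring
        exact two_ne_zero_zmod hn (by linear_combination -e1 - e2)
      have : delta n m v = -1 := by simp [delta, hmv, hcond]
      rw [this]
      have e2 : ((v.val : ZMod n)) = ((m v).val : ZMod n) + 1 := by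
        rw [← h2, ZMod.natCast_mod]; push_cast; ring
      push_cast
      linear_combination -e2

lemma delta_add_delta {n : ℕ} (hn : 4 ≤ n) {m : Fin n → Fin n}
    (hm : IsMatchingPerm (cycleGraph n) m) (v : Fin n) :
    delta n m v + delta n m (m v) = 0 := by
  have h1 := delta_step hn hm v
  have h2 := delta_step hn hm (m v)
  rw [hm.1 v] at h2
  have : ((delta n m v + delta n m (m v) : ℤ) : ZMod n) = 0 := by
    push_cast
    rw [h1] at h2
    linear_combination -h2
  have hd := (ZMod.intCast_zmod_eq_zero_iff_dvd _ n).mp this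
  have b1 := delta_abs_le n m v
  have b2 := delta_abs_le n m (m v)
  refine Int.eq_zero_of_abs_lt_dvd hd ?_
  have : |delta n m v + delta n m (m v)| ≤ 2 := by
    calc |delta n m v + delta n m (m v)| ≤ |delta n m v| + |delta n m (m v)| := abs_add_le _ _
    _ ≤ 2 := by omega
  have : (4 : ℤ) ≤ n := by exact_mod_cast hn
  omega

lemma sum_delta {n : ℕ} (hn : 4 ≤ n) {m : Fin n → Fin n}
    (hm : IsMatchingPerm (cycleGraph n) m) :
    ∑ v : Fin n, delta n m v = 0 := by
  refine Finset.sum_involution (fun v _ => m v) (fun v _ => delta_add_delta hn hm v)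
    (fun v _ hne => ?_) (fun v _ => Finset.mem_univ _) (fun v _ => hm.1 v)
  intro he
  apply hne
  simp [delta, he]

/-- Total displacement of the token ending at `v`. -/
def Disp (n : ℕ) : List (Fin n → Fin n) → Fin n → ℤ
  | [], _ => 0
  | m :: t, v => -delta n m (t.foldr (· ∘ ·) id v) + Disp n t v

lemma disp_cong {n : ℕ} (hn : 4 ≤ n) (ms : List (Fin n → Fin n))
    (hms : ∀ m ∈ ms, IsMatchingPerm (cycleGraph n) m) (v : Fin n) :
    (v.val : ZMod n) = ((ms.foldr (· ∘ ·) id v).val : ZMod n) + Disp n ms v := by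
  induction ms with
  | nil => simp [Disp]
  | cons m t ih =>
    have hm := hms m List.mem_cons_self
    have ih' := ih (fun m' hm' => hms m' (List.mem_cons_of_mem _ hm'))
    have step := delta_step hn hm (t.foldr (· ∘ ·) id v)
    simp only [List.foldr_cons, Function.comp_apply, Disp]
    push_cast
    rw [ih', step]
    ring

lemma disp_abs_le {n : ℕ} (ms : List (Fin n → Fin n)) (v : Fin n) :
    |Disp n ms v| ≤ ms.length := by
  induction ms with
  | nil => simp [Disp]
  | cons m t ih =>
    have h1 := delta_abs_le n m (t.foldr (· ∘ ·) id v)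
    have : |Disp n (m :: t) v| ≤ |(-delta n m (t.foldr (· ∘ ·) id v))| + |Disp n t v| := abs_add_le _ _
    simp only [List.length_cons]
    rw [abs_neg] at this
    push_cast
    have := ih
    omega

lemma foldr_bijective {n : ℕ} (ms : List (Fin n → Fin n))
    (hms : ∀ m ∈ ms, IsMatchingPerm (cycleGraph n) m) :
    Function.Bijective (ms.foldr (· ∘ ·) id) := by
  induction ms with
  | nil => simpa using Function.bijective_id
  | cons m t ih =>
    have hm := hms m List.mem_cons_self
    have ih' := ih (fun m' hm' => hms m' (List.mem_cons_of_mem _ hm'))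
    simpa using (hm.1.bijective).comp ih'

lemma sum_disp {n : ℕ} (hn : 4 ≤ n) (ms : List (Fin n → Fin n))
    (hms : ∀ m ∈ ms, IsMatchingPerm (cycleGraph n) m) :
    ∑ v : Fin n, Disp n ms v = 0 := by
  induction ms with
  | nil => simp [Disp]
  | cons m t ih =>
    have hm := hms m List.mem_cons_self
    have ht : ∀ m' ∈ t, IsMatchingPerm (cycleGraph n) m' :=
      fun m' hm' => hms m' (List.mem_cons_of_mem _ hm')
    have ih' := ih ht
    simp only [Disp, Finset.sum_add_distrib, Finset.sum_neg_distrib, ih', add_zero]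
    have hb := foldr_bijective t ht
    rw [hb.sum_comp (fun w => delta n m w), sum_delta hn hm]
    simp

lemma rotDown_cast {n : ℕ} (hn : 4 ≤ n) (i : Fin n) :
    ((rotDown n i).val : ZMod n) = (i.val : ZMod n) - 1 := by
  unfold rotDown
  split_ifs with h
  · simp only [h]
    have : ((n - 1 : ℕ) : ZMod n) = (n : ZMod n) - 1 := by
      push_cast [Nat.cast_sub (by omega : 1 ≤ n)]; ring
    simp [this, ZMod.natCast_self]
  · simp only
    push_cast [Nat.cast_sub (by omega : 1 ≤ i.val)]
    ring

/-- on the even cycle of length `n = 2r ≥ 4`, every solution of the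
cyclic-rotation instance has length at least `n - 1`. -/
theorem stmt_2 (n : ℕ) (hn : 4 ≤ n) (heven : Even n)
    (ms : List (Fin n → Fin n)) (hms : Solves (cycleGraph n) (rotDown n) ms) :
    n - 1 ≤ ms.length := by
  obtain ⟨hmatch, hsolve⟩ := hms
  -- each Disp ≡ -1 mod n
  have key : ∀ v : Fin n, (n : ℤ) ∣ Disp n ms v + 1 := by
    intro v
    have hfv : rotDown n (ms.foldr (· ∘ ·) id v) = v := congrFun hsolve v
    have hc : ((ms.foldr (· ∘ ·) id v).val : ZMod n) = (v.val : ZMod n) + 1 := by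
      have := rotDown_cast hn (ms.foldr (· ∘ ·) id v)
      rw [hfv] at this
      linear_combination -this
    have := disp_cong hn ms hmatch v
    rw [hc] at this
    have h0 : ((Disp n ms v + 1 : ℤ) : ZMod n) = 0 := by
      push_cast
      linear_combination -this
    exact (ZMod.intCast_zmod_eq_zero_iff_dvd _ n).mp h0
  have hsum := sum_disp hn ms hmatch
  -- some v has Disp ≥ n - 1
  have hex : ∃ v : Fin n, (n : ℤ) - 1 ≤ Disp n ms v := by
    by_contra hcon
    push_neg at hcon
    have hall : ∀ v : Fin n, Disp n ms v ≤ -1 := by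
      intro v
      have hlt := hcon v
      have hdvd := key v
      rcases (lt_or_ge 0 (Disp n ms v + 1)) with hpos | hle
      · have := Int.le_of_dvd hpos hdvd
        omega
      · omega
    have : ∑ v : Fin n, Disp n ms v ≤ ∑ _v : Fin n, (-1 : ℤ) :=
      Finset.sum_le_sum (fun v _ => hall v)
    simp [Finset.sum_const, Fintype.card_fin] at this
    rw [hsum] at this
    have hn' : (4 : ℤ) ≤ n := by exact_mod_cast hn
    omega
  obtain ⟨v, hv⟩ := hex
  have := disp_abs_le ms v
  have hn' : (4 : ℤ) ≤ n := by exact_mod_cast hn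
  have : (n : ℤ) - 1 ≤ ms.length := by
    have habs : Disp n ms v ≤ |Disp n ms v| := le_abs_self _
    omega
  omega
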